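/- Let K be a field of characteristic zero, ℓ ≥ 1 an integer, and for each i in {0,…,ℓ−1} let p_i and q_i be polynomials in one variable x with coefficients in the field K(z) of rational functions, such that q_i evaluated at every natural number is a nonzero element of K(z). Define a_k := p_i(k)/q_i(k) where i = k mod ℓ, and let (P_k) and (Q_k) be the sequences in K(z) defined by P_{−1} = 1, P_0 = 0, Q_{−1} = 0, Q_0 = 1 and, for k ≥ 1, P_k = P_{k−1} + a_k·P_{k−2} and Q_k = Q_{k−1} + a_k·Q_{k−2}. Then (P_k) and (Q_k) are P-recursive sequences over K(z). -/

import Mathlib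

/-- A sequence `u : ℕ → L` with values in a field `L` is P-recursive if it satisfies
a nontrivial linear recurrence with polynomial coefficients. -/
def IsPRecursive {L : Type*} [Field L] (u : ℕ → L) : Prop :=
  ∃ (r : ℕ) (p : Fin (r + 1) → Polynomial L),
    (∃ i, p i ≠ 0) ∧
    ∀ n : ℕ, ∑ i : Fin (r + 1), Polynomial.eval (n : L) (p i) * u (n + (i : ℕ)) = 0

open Polynomial Finset

namespace CFPRec

variable {L : Type*} [Field L]

noncomputable def ABC (ℓ : ℕ) (p q : ℕ → Polynomial L) :
    ℕ → ((ℕ → Polynomial L) × (ℕ → Polynomial L) × Polynomial L)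
  | 0 => (fun _ => 1, fun _ => 0, 1)
  | (k+1) =>
    let t := ABC ℓ p q k
    (fun r => (t.2.1 ((r+1) % ℓ)).comp (X + 1) * (p ((r+1) % ℓ)).comp (X + 1) *
        ∏ i ∈ (Finset.range ℓ).erase ((r+1) % ℓ), (q i).comp (X + 1),
     fun r => ((t.1 ((r+1) % ℓ) + t.2.1 ((r+1) % ℓ)).comp (X + 1)) *
        ∏ i ∈ Finset.range ℓ, (q i).comp (X + 1),
     t.2.2.comp (X + 1) * ∏ i ∈ Finset.range ℓ, (q i).comp (X + 1))

lemma eval_comp_shift (f : Polynomial L) (n : ℕ) :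
    eval ((n : L)) (f.comp (X + 1)) = eval (((n + 1 : ℕ) : L)) f := by
  rw [eval_comp]; push_cast; simp

lemma C_eval_ne_zero (ℓ : ℕ) (p q : ℕ → Polynomial L)
    (hq : ∀ i < ℓ, ∀ k : ℕ, Polynomial.eval ((k : L)) (q i) ≠ 0) :
    ∀ k n : ℕ, eval ((n : L)) (ABC ℓ p q k).2.2 ≠ 0 := by
  intro k
  induction k with
  | zero => simp [ABC]
  | succ k ih =>
    intro n
    show eval ((n:L)) ((ABC ℓ p q k).2.2.comp (X+1) * ∏ i ∈ Finset.range ℓ, (q i).comp (X+1)) ≠ 0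
    rw [eval_mul, eval_prod]
    apply mul_ne_zero
    · rw [eval_comp_shift]; exact ih (n+1)
    · apply prod_ne_zero_iff.2
      intro i hi
      rw [eval_comp_shift]
      exact hq i (mem_range.1 hi) (n+1)

lemma invariant (ℓ : ℕ) (hℓ : 1 ≤ ℓ) (p q : ℕ → Polynomial L)
    (hq : ∀ i < ℓ, ∀ k : ℕ, Polynomial.eval ((k : L)) (q i) ≠ 0)
    (a : ℕ → L)
    (ha : ∀ k : ℕ, a k = Polynomial.eval ((k : L)) (p (k % ℓ)) /
        Polynomial.eval ((k : L)) (q (k % ℓ)))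
    (u : ℕ → L) (hu : ∀ k : ℕ, u (k + 2) = u (k + 1) + a (k + 1) * u k) :
    ∀ k n : ℕ, eval ((n : L)) (ABC ℓ p q k).2.2 * u (n + k) =
      eval ((n : L)) ((ABC ℓ p q k).1 (n % ℓ)) * u n +
      eval ((n : L)) ((ABC ℓ p q k).2.1 (n % ℓ)) * u (n + 1) := by
  intro k
  induction k with
  | zero => simp [ABC]
  | succ k ih =>
    intro n
    have hs : (n + 1) % ℓ < ℓ := Nat.mod_lt _ (by omega)
    have hmod : ((n % ℓ) + 1) % ℓ = (n + 1) % ℓ := Nat.mod_add_mod n ℓ 1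
    have e1 := ih (n + 1)
    have e2 := hu n
    have e3 := ha (n + 1)
    set s := (n + 1) % ℓ with hsdef
    set x : L := (((n+1:ℕ)) : L) with hx
    have hq1 : eval (((n+1 : ℕ)) : L) (q s) ≠ 0 := hq s hs (n + 1)
    have e4 : eval x (q s) * u (n + 2) =
        eval x (q s) * u (n + 1) + eval x (p s) * u n := by
      rw [e2, e3]; field_simp [show eval x (q s) ≠ 0 from hq1]
    have hsplit : ∏ i ∈ Finset.range ℓ, eval x (q i)
        = eval x (q s) * ∏ i ∈ (Finset.range ℓ).erase s, eval x (q i) :=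
      (Finset.mul_prod_erase _ _ (mem_range.2 hs)).symm
    simp only [ABC, eval_mul, eval_add, eval_prod, eval_comp_shift, hmod]
    rw [show n + (k + 1) = (n + 1) + k from by ring, hsplit]
    set c := eval x (ABC ℓ p q k).2.2
    set α := eval x ((ABC ℓ p q k).1 s)
    set β := eval x ((ABC ℓ p q k).2.1 s)
    set ps := eval x (p s)
    set qs := eval x (q s)
    set π := ∏ i ∈ (Finset.range ℓ).erase s, eval x (q i)
    linear_combination (qs * π) * e1 + β * π * e4

theorem key (ℓ : ℕ) (hℓ : 1 ≤ ℓ) (p q : ℕ → Polynomial L)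
    (hq : ∀ i < ℓ, ∀ k : ℕ, Polynomial.eval ((k : L)) (q i) ≠ 0)
    (a : ℕ → L)
    (ha : ∀ k : ℕ, a k = Polynomial.eval ((k : L)) (p (k % ℓ)) /
        Polynomial.eval ((k : L)) (q (k % ℓ)))
    (u : ℕ → L) (hu : ∀ k : ℕ, u (k + 2) = u (k + 1) + a (k + 1) * u k) :
    IsPRecursive u := by
  classical
  set F := FractionRing (Polynomial L) with hF
  let φ : Polynomial L →+* F := algebraMap (Polynomial L) F
  have hφ : Function.Injective φ := IsFractionRing.injective (Polynomial L) F
  set A : ℕ → ℕ → Polynomial L := fun k r => (ABC ℓ p q k).1 r with hA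
  set B : ℕ → ℕ → Polynomial L := fun k r => (ABC ℓ p q k).2.1 r with hB
  set C : ℕ → Polynomial L := fun k => (ABC ℓ p q k).2.2 with hCdef
  have hC : ∀ k n : ℕ, eval ((n : L)) (C k) ≠ 0 := C_eval_ne_zero ℓ p q hq
  have hC0 : ∀ k, C k ≠ 0 := by
    intro k h
    exact hC k 0 (by rw [h]; simp)
  set E : Fin (2*ℓ+1) → Polynomial L :=
    fun k => (∏ j ∈ Finset.univ.erase k, C (j : ℕ))^2 with hE
  set v : Fin (2*ℓ+1) → ((Fin ℓ ⊕ Fin ℓ) → F) :=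
    fun k => Sum.elim (fun r : Fin ℓ => φ (A (k : ℕ) (r : ℕ) * E k))
      (fun r : Fin ℓ => φ (B (k : ℕ) (r : ℕ) * E k)) with hv
  have hnotli : ¬ LinearIndependent F v := by
    intro h
    have h2 := h.fintype_card_le_finrank
    rw [Module.finrank_pi] at h2
    simp only [Fintype.card_sum, Fintype.card_fin] at h2
    omega
  obtain ⟨g, hg0, k0, hk0⟩ := Fintype.not_linearIndependent_iff.1 hnotli
  obtain ⟨b, hb⟩ := IsLocalization.exist_integer_multiples_of_finite
    (nonZeroDivisors (Polynomial L)) g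
  choose d hd using hb
  have hbne : φ (b : Polynomial L) ≠ 0 := by
    intro h
    exact nonZeroDivisors.coe_ne_zero b (hφ (by rw [h, map_zero]))
  have hgsum : ∀ w : Fin ℓ ⊕ Fin ℓ, ∑ k : Fin (2*ℓ+1), g k * v k w = 0 := by
    intro w
    have := congrFun hg0 w
    simpa [Finset.sum_apply] using this
  have hsum : ∀ w : Fin ℓ ⊕ Fin ℓ,
      ∑ k : Fin (2*ℓ+1), φ (d k) * v k w = 0 := by
    intro w
    have : ∑ k : Fin (2*ℓ+1), φ (d k) * v k w
        = φ (b : Polynomial L) * ∑ k : Fin (2*ℓ+1), g k * v k w := by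
      rw [Finset.mul_sum]
      refine Finset.sum_congr rfl fun k _ => ?_
      rw [hd k, Algebra.smul_def]
      ring
    rw [this, hgsum w, mul_zero]
  have hdk0 : d k0 ≠ 0 := by
    intro h
    apply hk0
    have := hd k0
    rw [h, map_zero] at this
    have h2 : φ (b : Polynomial L) * g k0 = 0 := by
      rw [← Algebra.smul_def]; exact this.symm
    rcases mul_eq_zero.1 h2 with h3 | h3
    · exact absurd h3 hbne
    · exact h3
  -- polynomial identities
  have hAid : ∀ r : Fin ℓ, ∑ k : Fin (2*ℓ+1), d k * (A (k : ℕ) (r : ℕ) * E k) = 0 := by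
    intro r
    apply hφ
    rw [map_sum, map_zero]
    simpa [hv] using hsum (Sum.inl r)
  have hBid : ∀ r : Fin ℓ, ∑ k : Fin (2*ℓ+1), d k * (B (k : ℕ) (r : ℕ) * E k) = 0 := by
    intro r
    apply hφ
    rw [map_sum, map_zero]
    simpa [hv] using hsum (Sum.inr r)
  refine ⟨2*ℓ, fun k => d k * ∏ j ∈ Finset.univ.erase k, C (j : ℕ), ⟨k0, ?_⟩, ?_⟩
  · exact mul_ne_zero hdk0 (Finset.prod_ne_zero_iff.2 fun j _ => hC0 _)
  · intro n
    have inv := invariant ℓ hℓ p q hq a ha u hu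
    have hT : (∏ j : Fin (2*ℓ+1), eval ((n : L)) (C (j : ℕ))) ≠ 0 :=
      Finset.prod_ne_zero_iff.2 fun j _ => hC _ n
    apply mul_left_cancel₀ hT
    rw [mul_zero, Finset.mul_sum]
    have hterm : ∀ k : Fin (2*ℓ+1),
        (∏ j : Fin (2*ℓ+1), eval ((n : L)) (C (j : ℕ))) *
          (eval ((n : L)) (d k * ∏ j ∈ Finset.univ.erase k, C (j : ℕ)) * u (n + (k : ℕ)))
        = eval ((n : L)) (d k) * eval ((n : L)) (E k) *
            (eval ((n : L)) (A (k : ℕ) (n % ℓ)) * u n) +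
          eval ((n : L)) (d k) * eval ((n : L)) (E k) *
            (eval ((n : L)) (B (k : ℕ) (n % ℓ)) * u (n + 1)) := by
      intro k
      have hTsplit : (∏ j : Fin (2*ℓ+1), eval ((n : L)) (C (j : ℕ)))
          = eval ((n : L)) (C (k : ℕ)) * ∏ j ∈ Finset.univ.erase k, eval ((n : L)) (C (j : ℕ)) :=
        (Finset.mul_prod_erase _ _ (Finset.mem_univ k)).symm
      have hinv := inv (k : ℕ) n
      rw [hTsplit]
      simp only [eval_mul, eval_pow, eval_prod, hE]
      set t := eval ((n : L)) (C (k : ℕ))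
      set π := ∏ j ∈ Finset.univ.erase k, eval ((n : L)) (C (j : ℕ))
      set dk := eval ((n : L)) (d k)
      set α := eval ((n : L)) (A (k : ℕ) (n % ℓ))
      set β := eval ((n : L)) (B (k : ℕ) (n % ℓ))
      linear_combination (dk * π^2) * hinv
    rw [Finset.sum_congr rfl fun k _ => hterm k, Finset.sum_add_distrib]
    have hr : n % ℓ < ℓ := Nat.mod_lt _ (by omega)
    have h1 : ∑ k : Fin (2*ℓ+1), eval ((n : L)) (d k) * eval ((n : L)) (E k) *
        (eval ((n : L)) (A (k : ℕ) (n % ℓ)) * u n) = 0 := by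
      have := congrArg (eval ((n : L))) (hAid ⟨n % ℓ, hr⟩)
      rw [eval_finset_sum, eval_zero] at this
      calc ∑ k : Fin (2*ℓ+1), eval ((n : L)) (d k) * eval ((n : L)) (E k) *
            (eval ((n : L)) (A (k : ℕ) (n % ℓ)) * u n)
          = (∑ k : Fin (2*ℓ+1), eval ((n : L)) (d k * (A (k : ℕ) (n % ℓ) * E k))) * u n := by
            rw [Finset.sum_mul]
            refine Finset.sum_congr rfl fun k _ => ?_
            simp only [eval_mul]; ring
        _ = 0 := by rw [this]; ring
    have h2 : ∑ k : Fin (2*ℓ+1), eval ((n : L)) (d k) * eval ((n : L)) (E k) *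
        (eval ((n : L)) (B (k : ℕ) (n % ℓ)) * u (n + 1)) = 0 := by
      have := congrArg (eval ((n : L))) (hBid ⟨n % ℓ, hr⟩)
      rw [eval_finset_sum, eval_zero] at this
      calc ∑ k : Fin (2*ℓ+1), eval ((n : L)) (d k) * eval ((n : L)) (E k) *
            (eval ((n : L)) (B (k : ℕ) (n % ℓ)) * u (n + 1))
          = (∑ k : Fin (2*ℓ+1), eval ((n : L)) (d k * (B (k : ℕ) (n % ℓ) * E k))) * u (n + 1) := by
            rw [Finset.sum_mul]
            refine Finset.sum_congr rfl fun k _ => ?_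
            simp only [eval_mul]; ring
        _ = 0 := by rw [this]; ring
    rw [h1, h2, add_zero]

end CFPRec

/-- **Lemma (numerators and denominators of interlaced-rational continued fractions
are P-recursive).**
Let the partial numerators be `a_k = p_{k mod ℓ}(k)/q_{k mod ℓ}(k)` with
`p_i, q_i ∈ K(z)[x]` and `q_i` nonvanishing at every natural number, and let
`(P_k)` and `(Q_k)` be the numerator and denominator sequences of the continued
fraction (indexed so that index `0` corresponds to `P_{-1}`, `Q_{-1}`).  Then
`(P_k)` and `(Q_k)` are P-recursive over `K(z)`. -/
theorem convergents_isPRecursive {K : Type*} [Field K] [CharZero K]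
    (ℓ : ℕ) (hℓ : 1 ≤ ℓ)
    (p q : ℕ → Polynomial (RatFunc K))
    (hq : ∀ i < ℓ, ∀ k : ℕ, Polynomial.eval ((k : RatFunc K)) (q i) ≠ 0)
    (a : ℕ → RatFunc K)
    (ha : ∀ k : ℕ, a k =
      Polynomial.eval ((k : RatFunc K)) (p (k % ℓ)) /
        Polynomial.eval ((k : RatFunc K)) (q (k % ℓ)))
    (P Q : ℕ → RatFunc K)
    -- `P 0, Q 0` stand for `P₋₁, Q₋₁` and `P (k+1), Q (k+1)` for `P_k, Q_k`
    (hPinit : P 0 = 1 ∧ P 1 = 0) (hQinit : Q 0 = 0 ∧ Q 1 = 1)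
    (hPrec : ∀ k : ℕ, P (k + 2) = P (k + 1) + a (k + 1) * P k)
    (hQrec : ∀ k : ℕ, Q (k + 2) = Q (k + 1) + a (k + 1) * Q k) :
    IsPRecursive P ∧ IsPRecursive Q := by
  exact ⟨CFPRec.key ℓ hℓ p q hq a ha P hPrec, CFPRec.key ℓ hℓ p q hq a ha Q hQrec⟩
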